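/- For constants a > 0 and b, c ∈ ℝ, define h(n) = logit(Φ(a·n + b·√n + c)). Then lim_{n→∞} (d/dn) h(n) / n = a², i.e., h(n) = (a²/2)n² + o(n²) in the sense that h grows like a quadratic in n with leading coefficient a²/2, and the derivative of h with respect to n² converges to a²/2. -/

import Mathlib

open Filter Real

/-- Standard normal CDF. -/
noncomputable def stdNormalCDF (z : ℝ) : ℝ :=
  ∫ t in Set.Iic z, Real.exp (-t ^ 2 / 2) / Real.sqrt (2 * Real.pi)

/-- Logit function. -/
noncomputable def logit (x : ℝ) : ℝ := Real.log x - Real.log (1 - x)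

section Aux

open MeasureTheory Set

noncomputable def phi (t : ℝ) : ℝ := Real.exp (-t ^ 2 / 2) / Real.sqrt (2 * Real.pi)

lemma phi_pos (t : ℝ) : 0 < phi t := by
  apply div_pos (Real.exp_pos _)
  exact Real.sqrt_pos.2 (by positivity)

lemma phi_eq (t : ℝ) : phi t = Real.exp (-(1/2) * t ^ 2) * (Real.sqrt (2 * Real.pi))⁻¹ := by
  rw [phi, div_eq_mul_inv]; ring_nf

lemma continuous_phi : Continuous phi := by
  unfold phi; fun_prop

lemma integrable_phi : Integrable phi := by
  have h := integrable_exp_neg_mul_sq (b := 1/2) (by norm_num)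
  have := h.mul_const (Real.sqrt (2 * Real.pi))⁻¹
  refine this.congr ?_
  filter_upwards with t
  rw [phi_eq]

lemma integral_phi : ∫ t, phi t = 1 := by
  have h : ∫ t : ℝ, Real.exp (-(1/2) * t ^ 2) = Real.sqrt (Real.pi / (1/2)) :=
    integral_gaussian (1/2)
  have h2π : Real.sqrt (2 * Real.pi) ≠ 0 := by positivity
  calc ∫ t, phi t = (∫ t : ℝ, Real.exp (-(1/2) * t ^ 2)) * (Real.sqrt (2 * Real.pi))⁻¹ := by
        rw [← integral_mul_const]; exact integral_congr_ae (by filter_upwards with t; rw [phi_eq])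
    _ = 1 := by
        rw [h]
        have : Real.pi / (1/2) = 2 * Real.pi := by ring
        rw [this, mul_inv_cancel₀ h2π]

lemma cdf_eq (z : ℝ) : stdNormalCDF z = ∫ t in Set.Iic z, phi t := rfl

lemma hasDerivAt_cdf (x : ℝ) : HasDerivAt stdNormalCDF (phi x) x := by
  have key : ∀ z : ℝ, stdNormalCDF z = stdNormalCDF 0 + ∫ t in (0:ℝ)..z, phi t := by
    intro z
    have h := intervalIntegral.integral_Iic_sub_Iic (μ := volume) (f := phi) (a := 0) (b := z)
      integrable_phi.integrableOn integrable_phi.integrableOn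
    rw [cdf_eq, cdf_eq]; linarith
  have hd : HasDerivAt (fun z => stdNormalCDF 0 + ∫ t in (0:ℝ)..z, phi t) (phi x) x := by
    have := intervalIntegral.integral_hasDerivAt_right
      (f := phi) (a := 0) (b := x)
      (continuous_phi.intervalIntegrable 0 x)
      continuous_phi.stronglyMeasurable.stronglyMeasurableAtFilter
      continuous_phi.continuousAt
    simpa using (this.const_add (stdNormalCDF 0))
  exact hd.congr_of_eventuallyEq (Filter.Eventually.of_forall fun z => key z)

lemma one_sub_cdf (z : ℝ) : 1 - stdNormalCDF z = ∫ t in Set.Ioi z, phi t := by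
  have := intervalIntegral.integral_Iic_add_Ioi (μ := volume) (f := phi) (b := z)
    integrable_phi.integrableOn integrable_phi.integrableOn
  rw [integral_phi] at this
  rw [cdf_eq]; linarith

lemma cdf_pos (z : ℝ) : 0 < stdNormalCDF z := by
  rw [cdf_eq]
  refine (setIntegral_pos_iff_support_of_nonneg_ae ?_ integrable_phi.integrableOn).2 ?_
  · filter_upwards with t; exact (phi_pos t).le
  · have : Function.support phi ∩ Set.Iic z = Set.Iic z := by
      rw [inter_eq_right]; intro t _; exact (phi_pos t).ne'
    rw [this]
    simp [Real.volume_Iic]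

lemma cdf_lt_one (z : ℝ) : stdNormalCDF z < 1 := by
  have h : 0 < ∫ t in Set.Ioi z, phi t := by
    refine (setIntegral_pos_iff_support_of_nonneg_ae ?_ integrable_phi.integrableOn).2 ?_
    · filter_upwards with t; exact (phi_pos t).le
    · have : Function.support phi ∩ Set.Ioi z = Set.Ioi z := by
        rw [inter_eq_right]; intro t _; exact (phi_pos t).ne'
      rw [this]
      simp [Real.volume_Ioi]
  have := one_sub_cdf z
  linarith

lemma hasDerivAt_phi (t : ℝ) : HasDerivAt phi (-t * phi t) t := by
  have h1 : HasDerivAt (fun t : ℝ => -t ^ 2 / 2) (-t) t := by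
    have : HasDerivAt (fun t : ℝ => t ^ 2) (2 * t) t := by
      simpa using (hasDerivAt_pow 2 t)
    have h := (this.neg).div_const 2
    refine h.congr_deriv ?_; ring
  have h2 : HasDerivAt (fun t : ℝ => Real.exp (-t ^ 2 / 2)) (Real.exp (-t ^ 2 / 2) * (-t)) t :=
    (Real.hasDerivAt_exp _).comp t h1
  have h3 := h2.div_const (Real.sqrt (2 * Real.pi))
  refine h3.congr_deriv ?_
  unfold phi; ring

lemma tendsto_phi_atTop : Tendsto phi atTop (nhds 0) := by
  have h1 : Tendsto (fun t : ℝ => -t ^ 2 / 2) atTop atBot := by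
    apply Tendsto.atBot_div_const (by norm_num)
    exact tendsto_neg_atBot_iff.2 (tendsto_pow_atTop (by norm_num))
  have := (Real.tendsto_exp_atBot).comp h1
  have h2 := this.div_const (Real.sqrt (2 * Real.pi))
  rw [zero_div] at h2
  refine h2.congr fun t => ?_
  simp [Function.comp, phi]

lemma integrableOn_mul_phi (x : ℝ) : IntegrableOn (fun t => t * phi t) (Set.Ioi x) := by
  have h := integrable_mul_exp_neg_mul_sq (b := 1/2) (by norm_num)
  have := (h.mul_const (Real.sqrt (2 * Real.pi))⁻¹)
  refine (this.congr ?_).integrableOn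
  filter_upwards with t
  rw [phi_eq]; ring

lemma integral_mul_phi {x : ℝ} : ∫ t in Set.Ioi x, t * phi t = phi x := by
  have := integral_Ioi_of_hasDerivAt_of_tendsto' (a := x) (f := fun t => -phi t)
    (f' := fun t => t * phi t)
    (fun t _ => (hasDerivAt_phi t).neg.congr_deriv (by ring))
    (integrableOn_mul_phi x) (by simpa using tendsto_phi_atTop.neg)
  simpa using this

lemma mill_upper {x : ℝ} (hx : 0 < x) : 1 - stdNormalCDF x ≤ phi x / x := by
  rw [one_sub_cdf]
  have h1 : ∫ t in Set.Ioi x, phi t ≤ ∫ t in Set.Ioi x, (t / x) * phi t := by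
    refine setIntegral_mono_on integrable_phi.integrableOn
      (((integrableOn_mul_phi x).div_const x).congr (Filter.Eventually.of_forall fun t => by ring))
      measurableSet_Ioi ?_
    intro t ht
    have htx : x ≤ t := le_of_lt ht
    have : 1 ≤ t / x := (one_le_div hx).2 htx
    nlinarith [phi_pos t]
  have h2 : ∫ t in Set.Ioi x, (t / x) * phi t = phi x / x := by
    rw [show (fun t => (t / x) * phi t) = (fun t => (t * phi t) / x) by funext t; ring]
    rw [integral_div, integral_mul_phi]
  linarith

noncomputable def millG (t : ℝ) : ℝ := t / (1 + t ^ 2) * phi t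

noncomputable def millG' (t : ℝ) : ℝ := phi t * (1 - 2 / (1 + t ^ 2) ^ 2)

lemma hasDerivAt_millG (t : ℝ) : HasDerivAt (fun t => -millG t) (millG' t) t := by
  have h1t : (1 : ℝ) + t ^ 2 ≠ 0 := by positivity
  have hq : HasDerivAt (fun t : ℝ => t / (1 + t ^ 2))
      ((1 * (1 + t ^ 2) - t * (2 * t)) / (1 + t ^ 2) ^ 2) t := by
    exact (hasDerivAt_id t).div ((hasDerivAt_pow 2 t).const_add 1 |>.congr_deriv (by ring)) h1t
  have hG : HasDerivAt (fun t => millG t)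
      ((1 * (1 + t ^ 2) - t * (2 * t)) / (1 + t ^ 2) ^ 2 * phi t
        + t / (1 + t ^ 2) * (-t * phi t)) t := hq.mul (hasDerivAt_phi t)
  have := hG.neg
  refine this.congr_deriv ?_
  unfold millG'
  field_simp
  ring

lemma millG'_le_phi (t : ℝ) : millG' t ≤ phi t := by
  unfold millG'
  have h1 : 0 < 2 / (1 + t ^ 2) ^ 2 := by positivity
  nlinarith [phi_pos t]

lemma integrableOn_millG' (x : ℝ) : IntegrableOn millG' (Set.Ioi x) := by
  refine Integrable.mono (integrable_phi.integrableOn) ?_ ?_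
  · have hc : Continuous millG' := by
      apply continuous_phi.mul
      apply continuous_const.sub
      apply Continuous.div continuous_const (by fun_prop)
      intro t; positivity
    exact hc.aestronglyMeasurable.restrict
  · filter_upwards with t
    rw [Real.norm_eq_abs, Real.norm_eq_abs, abs_of_pos (phi_pos t), millG', abs_mul,
      abs_of_pos (phi_pos t)]
    have h2 : 0 < 2 / (1 + t ^ 2) ^ 2 := by positivity
    have h3 : 2 / (1 + t ^ 2) ^ 2 ≤ 2 := by
      apply div_le_of_le_mul₀ (by positivity) (by norm_num)
      nlinarith [sq_nonneg t, sq_nonneg (t^2)]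
    have : |1 - 2 / (1 + t ^ 2) ^ 2| ≤ 1 := by
      rw [abs_le]; constructor <;> nlinarith
    nlinarith [phi_pos t, abs_nonneg (1 - 2 / (1 + t ^ 2) ^ 2)]

lemma tendsto_millG_atTop : Tendsto (fun t => -millG t) atTop (nhds 0) := by
  rw [show (0:ℝ) = -0 by ring]
  apply Tendsto.neg
  apply squeeze_zero_norm' (a := phi)
  · filter_upwards [Filter.eventually_ge_atTop (0:ℝ)] with t ht
    rw [Real.norm_eq_abs, millG, abs_mul, abs_of_pos (phi_pos t)]
    have h1 : |t / (1 + t ^ 2)| ≤ 1 := by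
      rw [abs_div, abs_of_nonneg ht, abs_of_pos (show (0:ℝ) < 1 + t^2 by positivity)]
      rw [div_le_one (by positivity)]
      nlinarith [sq_nonneg (t - 1)]
    nlinarith [phi_pos t]
  · exact tendsto_phi_atTop

lemma integral_millG' {x : ℝ} : ∫ t in Set.Ioi x, millG' t = millG x := by
  have := integral_Ioi_of_hasDerivAt_of_tendsto' (a := x) (f := fun t => -millG t)
    (f' := millG') (fun t _ => hasDerivAt_millG t) (integrableOn_millG' x) tendsto_millG_atTop
  simpa using this

lemma mill_lower (x : ℝ) : x / (1 + x ^ 2) * phi x ≤ 1 - stdNormalCDF x := by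
  rw [one_sub_cdf]
  have h1 : ∫ t in Set.Ioi x, millG' t ≤ ∫ t in Set.Ioi x, phi t :=
    setIntegral_mono_on (integrableOn_millG' x) integrable_phi.integrableOn
      measurableSet_Ioi (fun t _ => millG'_le_phi t)
  rw [integral_millG'] at h1
  exact h1

lemma one_sub_cdf_pos (z : ℝ) : 0 < 1 - stdNormalCDF z := by linarith [cdf_lt_one z]

lemma tendsto_sqrt_top : Tendsto Real.sqrt atTop atTop := by
  apply Filter.tendsto_atTop_atTop.2
  intro b
  exact ⟨b ^ 2, fun a ha => le_trans (le_abs_self b)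
    (by rw [← Real.sqrt_sq_eq_abs]; exact Real.sqrt_le_sqrt ha)⟩

lemma tendsto_inv_sqrt : Tendsto (fun x : ℝ => (Real.sqrt x)⁻¹) atTop (nhds 0) :=
  tendsto_sqrt_top.inv_tendsto_atTop

lemma tendsto_phi_div : Tendsto (fun x : ℝ => phi x / x) atTop (nhds 0) := by
  have := tendsto_phi_atTop.mul tendsto_inv_atTop_zero
  simpa [div_eq_mul_inv] using this

lemma tendsto_cdf_atTop : Tendsto stdNormalCDF atTop (nhds 1) := by
  apply tendsto_of_tendsto_of_tendsto_of_le_of_le'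
    (g := fun x => 1 - phi x / x) (h := fun _ => (1:ℝ))
  · simpa using (tendsto_const_nhds (x := (1:ℝ)) (f := atTop)).sub tendsto_phi_div
  · exact tendsto_const_nhds
  · filter_upwards [Filter.eventually_gt_atTop (0:ℝ)] with x hx
    linarith [mill_upper hx]
  · filter_upwards with x; exact (cdf_lt_one x).le

lemma tendsto_mill :
    Tendsto (fun x => phi x / ((1 - stdNormalCDF x) * x)) atTop (nhds 1) := by
  apply tendsto_of_tendsto_of_tendsto_of_le_of_le'
    (g := fun _ => (1:ℝ)) (h := fun x => 1 + (x⁻¹) ^ 2)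
  · exact tendsto_const_nhds
  · simpa using (tendsto_const_nhds (x := (1:ℝ)) (f := atTop)).add
      ((tendsto_inv_atTop_zero (𝕜 := ℝ)).pow 2)
  · filter_upwards [Filter.eventually_gt_atTop (0:ℝ)] with x hx
    have h1 := mill_upper hx
    have h2 := one_sub_cdf_pos x
    rw [le_div_iff₀ (by positivity), one_mul]
    calc (1 - stdNormalCDF x) * x ≤ phi x / x * x := by nlinarith
      _ = phi x := by field_simp
  · filter_upwards [Filter.eventually_gt_atTop (0:ℝ)] with x hx
    have h1 := mill_lower x
    have h2 := one_sub_cdf_pos x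
    have h3 := phi_pos x
    rw [div_le_iff₀ (by positivity)]
    have key : x ^ 2 * phi x ≤ (1 - stdNormalCDF x) * x * (1 + x ^ 2) := by
      have h4 := mul_le_mul_of_nonneg_right h1 (show (0:ℝ) ≤ x * (1 + x ^ 2) by positivity)
      have h5 : x / (1 + x ^ 2) * phi x * (x * (1 + x ^ 2)) = x ^ 2 * phi x := by
        field_simp
      linarith [h5 ▸ h4]
    have : (1 + (x⁻¹) ^ 2) * ((1 - stdNormalCDF x) * x) * x ^ 2
        = (1 - stdNormalCDF x) * x * (x ^ 2 + 1) := by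
      field_simp
    nlinarith [key, this, pow_pos hx 2]

lemma hasDerivAt_logit {x : ℝ} (h0 : 0 < x) (h1 : x < 1) :
    HasDerivAt logit (x⁻¹ + (1 - x)⁻¹) x := by
  have ha : HasDerivAt Real.log x⁻¹ x := Real.hasDerivAt_log h0.ne'
  have hb : HasDerivAt (fun x : ℝ => Real.log (1 - x)) ((1 - x)⁻¹ * (-1)) x := by
    have hin : HasDerivAt (fun x : ℝ => 1 - x) (-1) x := by
      simpa using (hasDerivAt_id x).const_sub 1
    exact (Real.hasDerivAt_log (by linarith)).comp x hin
  have := ha.sub hb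
  refine this.congr_deriv ?_
  ring

lemma hasDerivAt_comp {u : ℝ → ℝ} {u' n : ℝ} (hu : HasDerivAt u u' n) :
    HasDerivAt (fun n => logit (stdNormalCDF (u n)))
      (u' * (phi (u n) * ((stdNormalCDF (u n))⁻¹ + (1 - stdNormalCDF (u n))⁻¹))) n := by
  have hl := hasDerivAt_logit (cdf_pos (u n)) (cdf_lt_one (u n))
  have := (hl.comp (u n) (hasDerivAt_cdf (u n))).comp n hu
  refine this.congr_deriv ?_
  ring

lemma core {u r : ℝ → ℝ} {C : ℝ} (hu : Tendsto u atTop atTop)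
    (h1 : Tendsto r atTop (nhds 0))
    (h2 : Tendsto (fun n => r n * u n) atTop (nhds C)) :
    Tendsto (fun n => r n * (phi (u n) *
      ((stdNormalCDF (u n))⁻¹ + (1 - stdNormalCDF (u n))⁻¹))) atTop (nhds C) := by
  have hphi : Tendsto (fun n => phi (u n)) atTop (nhds 0) := tendsto_phi_atTop.comp hu
  have hcdf : Tendsto (fun n => (stdNormalCDF (u n))⁻¹) atTop (nhds 1) := by
    have := (tendsto_cdf_atTop.comp hu).inv₀ (by norm_num)
    simpa using this
  have hmill : Tendsto (fun n => phi (u n) / ((1 - stdNormalCDF (u n)) * u n)) atTop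
      (nhds 1) := tendsto_mill.comp hu
  have hterm1 : Tendsto (fun n => r n * (phi (u n) * (stdNormalCDF (u n))⁻¹)) atTop
      (nhds 0) := by
    have := h1.mul (hphi.mul hcdf)
    simpa using this
  have hterm2 : Tendsto (fun n => (r n * u n) *
      (phi (u n) / ((1 - stdNormalCDF (u n)) * u n))) atTop (nhds C) := by
    have := h2.mul hmill
    simpa using this
  have hsum := hterm1.add hterm2
  rw [zero_add] at hsum
  refine Tendsto.congr' ?_ hsum
  filter_upwards [hu.eventually (Filter.eventually_gt_atTop (0:ℝ))] with n hn
  have h3 := one_sub_cdf_pos (u n)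
  field_simp

lemma part1 (a b c : ℝ) (ha : 0 < a) :
    Tendsto (fun n : ℝ =>
        deriv (fun n : ℝ => logit (stdNormalCDF (a * n + b * Real.sqrt n + c))) n / n)
      atTop (nhds (a ^ 2)) := by
  set u : ℝ → ℝ := fun n => a * n + b * Real.sqrt n + c with hudef
  set r : ℝ → ℝ := fun n => (a + b * (1 / (2 * Real.sqrt n))) / n with hrdef
  have hx : Tendsto (fun n : ℝ => (Real.sqrt n)⁻¹) atTop (nhds 0) := tendsto_inv_sqrt
  have huT : Tendsto u atTop atTop := by
    have h1 : Tendsto (fun n : ℝ => Real.sqrt n * (a * Real.sqrt n + b) + c) atTop atTop := by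
      apply tendsto_atTop_add_const_right
      apply Tendsto.atTop_mul_atTop₀ tendsto_sqrt_top
      apply tendsto_atTop_add_const_right
      exact tendsto_sqrt_top.const_mul_atTop ha
    refine h1.congr' ?_
    filter_upwards [Filter.eventually_ge_atTop (0:ℝ)] with n hn
    have h2 : Real.sqrt n * Real.sqrt n = n := Real.mul_self_sqrt hn
    show Real.sqrt n * (a * Real.sqrt n + b) + c = a * n + b * Real.sqrt n + c
    obtain ⟨q, hq0, rfl⟩ : ∃ q, 0 ≤ q ∧ q * q = n := ⟨Real.sqrt n, Real.sqrt_nonneg n, h2⟩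
    rw [Real.sqrt_mul_self hq0]
    ring
  have hr0 : Tendsto r atTop (nhds 0) := by
    have hc : Continuous (fun x : ℝ => (a + b / 2 * x) * x ^ 2) := by continuity
    have h0 := (hc.tendsto 0).comp hx
    have hval : (a + b / 2 * 0) * 0 ^ 2 = 0 := by ring
    rw [Function.comp_def, hval] at h0
    refine h0.congr' ?_
    filter_upwards [Filter.eventually_gt_atTop (0:ℝ)] with n hn
    have hq : 0 < Real.sqrt n := Real.sqrt_pos.2 hn
    have h2 : Real.sqrt n * Real.sqrt n = n := Real.mul_self_sqrt hn.le
    show (a + b / 2 * (Real.sqrt n)⁻¹) * (Real.sqrt n)⁻¹ ^ 2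
        = (a + b * (1 / (2 * Real.sqrt n))) / n
    obtain ⟨q, hq0, rfl⟩ : ∃ q, 0 < q ∧ q * q = n := ⟨Real.sqrt n, hq, h2⟩
    rw [Real.sqrt_mul_self hq0.le]
    have hqne : q ≠ 0 := hq0.ne'
    rw [eq_div_iff (by positivity)]
    field_simp
  have hru : Tendsto (fun n => r n * u n) atTop (nhds (a ^ 2)) := by
    have hc : Continuous (fun x : ℝ => (a + b / 2 * x) * (a + b * x + c * x ^ 2)) := by
      continuity
    have h0 := (hc.tendsto 0).comp hx
    have hval : (a + b / 2 * 0) * (a + b * 0 + c * 0 ^ 2) = a ^ 2 := by ring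
    rw [Function.comp_def, hval] at h0
    refine h0.congr' ?_
    filter_upwards [Filter.eventually_gt_atTop (0:ℝ)] with n hn
    have hq : 0 < Real.sqrt n := Real.sqrt_pos.2 hn
    have h2 : Real.sqrt n * Real.sqrt n = n := Real.mul_self_sqrt hn.le
    show (a + b / 2 * (Real.sqrt n)⁻¹) * (a + b * (Real.sqrt n)⁻¹ + c * (Real.sqrt n)⁻¹ ^ 2)
        = (a + b * (1 / (2 * Real.sqrt n))) / n * (a * n + b * Real.sqrt n + c)
    obtain ⟨q, hq0, rfl⟩ : ∃ q, 0 < q ∧ q * q = n := ⟨Real.sqrt n, hq, h2⟩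
    rw [Real.sqrt_mul_self hq0.le]
    have hqne : q ≠ 0 := hq0.ne'
    field_simp
  refine (core huT hr0 hru).congr' ?_
  filter_upwards [Filter.eventually_gt_atTop (0:ℝ)] with n hn
  have hq : 0 < Real.sqrt n := Real.sqrt_pos.2 hn
  have hd1 : HasDerivAt (fun n : ℝ => a * n) a n := by
    simpa using (hasDerivAt_id n).const_mul a
  have hd2 : HasDerivAt (fun n : ℝ => b * Real.sqrt n) (b * (1 / (2 * Real.sqrt n))) n :=
    (Real.hasDerivAt_sqrt hn.ne').const_mul b
  have hu : HasDerivAt u (a + b * (1 / (2 * Real.sqrt n))) n := by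
    simpa [hudef] using ((hd1.add hd2).add_const c)
  have hD := (hasDerivAt_comp hu).deriv
  rw [hudef] at hD
  rw [hD]
  rw [hrdef]
  simp only
  ring

lemma part2 (a b c : ℝ) (ha : 0 < a) :
    Tendsto (fun s : ℝ =>
        deriv (fun s : ℝ =>
          logit (stdNormalCDF (a * Real.sqrt s + b * Real.sqrt (Real.sqrt s) + c))) s)
      atTop (nhds (a ^ 2 / 2)) := by
  set u : ℝ → ℝ := fun s => a * Real.sqrt s + b * Real.sqrt (Real.sqrt s) + c with hudef
  set r : ℝ → ℝ := fun s =>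
    a * (1 / (2 * Real.sqrt s)) + b * (1 / (2 * Real.sqrt (Real.sqrt s)) * (1 / (2 * Real.sqrt s)))
    with hrdef
  have hss : Tendsto (fun s : ℝ => Real.sqrt (Real.sqrt s)) atTop atTop :=
    tendsto_sqrt_top.comp tendsto_sqrt_top
  have hy : Tendsto (fun s : ℝ => (Real.sqrt (Real.sqrt s))⁻¹) atTop (nhds 0) :=
    hss.inv_tendsto_atTop
  have huT : Tendsto u atTop atTop := by
    have h1 : Tendsto (fun s : ℝ =>
        Real.sqrt (Real.sqrt s) * (a * Real.sqrt (Real.sqrt s) + b) + c) atTop atTop := by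
      apply tendsto_atTop_add_const_right
      apply Tendsto.atTop_mul_atTop₀ hss
      apply tendsto_atTop_add_const_right
      exact hss.const_mul_atTop ha
    refine h1.congr' ?_
    filter_upwards [Filter.eventually_ge_atTop (0:ℝ)] with s hs
    have h2 : Real.sqrt (Real.sqrt s) * Real.sqrt (Real.sqrt s) = Real.sqrt s :=
      Real.mul_self_sqrt (Real.sqrt_nonneg s)
    show Real.sqrt (Real.sqrt s) * (a * Real.sqrt (Real.sqrt s) + b) + c
        = a * Real.sqrt s + b * Real.sqrt (Real.sqrt s) + c
    obtain ⟨p, hp0, hp2⟩ : ∃ p, 0 ≤ p ∧ p * p = Real.sqrt s :=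
      ⟨Real.sqrt (Real.sqrt s), Real.sqrt_nonneg _, h2⟩
    rw [← hp2, Real.sqrt_mul_self hp0]
    ring
  have hr0 : Tendsto r atTop (nhds 0) := by
    have hc : Continuous (fun x : ℝ => a / 2 * x ^ 2 + b / 4 * x ^ 3) := by continuity
    have h0 := (hc.tendsto 0).comp hy
    have hval : a / 2 * (0:ℝ) ^ 2 + b / 4 * 0 ^ 3 = 0 := by ring
    rw [Function.comp_def, hval] at h0
    refine h0.congr' ?_
    filter_upwards [Filter.eventually_gt_atTop (0:ℝ)] with s hs
    have hq : 0 < Real.sqrt s := Real.sqrt_pos.2 hs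
    have hp : 0 < Real.sqrt (Real.sqrt s) := Real.sqrt_pos.2 hq
    have h2 : Real.sqrt (Real.sqrt s) * Real.sqrt (Real.sqrt s) = Real.sqrt s :=
      Real.mul_self_sqrt (Real.sqrt_nonneg s)
    show a / 2 * ((Real.sqrt (Real.sqrt s))⁻¹) ^ 2 + b / 4 * ((Real.sqrt (Real.sqrt s))⁻¹) ^ 3
        = a * (1 / (2 * Real.sqrt s))
          + b * (1 / (2 * Real.sqrt (Real.sqrt s)) * (1 / (2 * Real.sqrt s)))
    obtain ⟨p, hp0, hp2⟩ : ∃ p, 0 < p ∧ p * p = Real.sqrt s :=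
      ⟨Real.sqrt (Real.sqrt s), hp, h2⟩
    rw [← hp2, Real.sqrt_mul_self hp0.le]
    have hpne : p ≠ 0 := hp0.ne'
    field_simp
    ring
  have hru : Tendsto (fun s => r s * u s) atTop (nhds (a ^ 2 / 2)) := by
    have hc : Continuous (fun x : ℝ => (a / 2 + b / 4 * x) * (a + b * x + c * x ^ 2)) := by
      continuity
    have h0 := (hc.tendsto 0).comp hy
    have hval : (a / 2 + b / 4 * (0:ℝ)) * (a + b * 0 + c * 0 ^ 2) = a ^ 2 / 2 := by ring
    rw [Function.comp_def, hval] at h0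
    refine h0.congr' ?_
    filter_upwards [Filter.eventually_gt_atTop (0:ℝ)] with s hs
    have hq : 0 < Real.sqrt s := Real.sqrt_pos.2 hs
    have hp : 0 < Real.sqrt (Real.sqrt s) := Real.sqrt_pos.2 hq
    have h2 : Real.sqrt (Real.sqrt s) * Real.sqrt (Real.sqrt s) = Real.sqrt s :=
      Real.mul_self_sqrt (Real.sqrt_nonneg s)
    show (a / 2 + b / 4 * (Real.sqrt (Real.sqrt s))⁻¹)
          * (a + b * (Real.sqrt (Real.sqrt s))⁻¹ + c * ((Real.sqrt (Real.sqrt s))⁻¹) ^ 2)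
        = (a * (1 / (2 * Real.sqrt s))
            + b * (1 / (2 * Real.sqrt (Real.sqrt s)) * (1 / (2 * Real.sqrt s))))
          * (a * Real.sqrt s + b * Real.sqrt (Real.sqrt s) + c)
    obtain ⟨p, hp0, hp2⟩ : ∃ p, 0 < p ∧ p * p = Real.sqrt s :=
      ⟨Real.sqrt (Real.sqrt s), hp, h2⟩
    rw [← hp2, Real.sqrt_mul_self hp0.le]
    have hpne : p ≠ 0 := hp0.ne'
    field_simp
    ring
  refine (core huT hr0 hru).congr' ?_
  filter_upwards [Filter.eventually_gt_atTop (0:ℝ)] with s hs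
  have hq : 0 < Real.sqrt s := Real.sqrt_pos.2 hs
  have hd1 : HasDerivAt (fun s : ℝ => a * Real.sqrt s) (a * (1 / (2 * Real.sqrt s))) s :=
    (Real.hasDerivAt_sqrt hs.ne').const_mul a
  have hdin : HasDerivAt Real.sqrt (1 / (2 * Real.sqrt s)) s := Real.hasDerivAt_sqrt hs.ne'
  have hdout : HasDerivAt Real.sqrt (1 / (2 * Real.sqrt (Real.sqrt s))) (Real.sqrt s) :=
    Real.hasDerivAt_sqrt hq.ne'
  have hd2 : HasDerivAt (fun s : ℝ => b * Real.sqrt (Real.sqrt s))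
      (b * (1 / (2 * Real.sqrt (Real.sqrt s)) * (1 / (2 * Real.sqrt s)))) s :=
    (hdout.comp s hdin).const_mul b
  have hu : HasDerivAt u
      (a * (1 / (2 * Real.sqrt s))
        + b * (1 / (2 * Real.sqrt (Real.sqrt s)) * (1 / (2 * Real.sqrt s)))) s := by
    simpa [hudef] using ((hd1.add hd2).add_const c)
  have hD := (hasDerivAt_comp hu).deriv
  rw [hudef] at hD
  rw [hD]

end Aux

theorem stmt_14 (a b c : ℝ) (ha : 0 < a) :
    Tendsto (fun n : ℝ =>
        deriv (fun n : ℝ => logit (stdNormalCDF (a * n + b * Real.sqrt n + c))) n / n)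
      atTop (nhds (a ^ 2)) ∧
    Tendsto (fun s : ℝ =>
        deriv (fun s : ℝ =>
          logit (stdNormalCDF (a * Real.sqrt s + b * Real.sqrt (Real.sqrt s) + c))) s)
      atTop (nhds (a ^ 2 / 2)) := by
  exact ⟨part1 a b c ha, part2 a b c ha⟩
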